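/- Substituting the invariants p₀,…,p₄ into the quadric G_M := y₀² + 3(y₁² + y₂² + y₃²) + 6y₄² recovers Maschke's octic polynomial: G_M(p₀,p₁,p₂,p₃,p₄) = F as polynomials in ℂ[x₀,x₁,x₂,x₃]. -/

import Mathlib

open MvPolynomial

/- Substituting the invariants `p₀,…,p₄` into the quadric
`G_M := y₀² + 3(y₁² + y₂² + y₃²) + 6y₄²` recovers Maschke's octic polynomial `F`. -/

/-- `p₀ := x₀⁴+x₁⁴+x₂⁴+x₃⁴`. -/
noncomputable def p0 : MvPolynomial (Fin 4) ℂ := X 0 ^ 4 + X 1 ^ 4 + X 2 ^ 4 + X 3 ^ 4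

/-- `p₁ := 2(x₀²x₁²+x₂²x₃²)`. -/
noncomputable def p1 : MvPolynomial (Fin 4) ℂ := 2 * (X 0 ^ 2 * X 1 ^ 2 + X 2 ^ 2 * X 3 ^ 2)

/-- `p₂ := 2(x₀²x₂²+x₁²x₃²)`. -/
noncomputable def p2 : MvPolynomial (Fin 4) ℂ := 2 * (X 0 ^ 2 * X 2 ^ 2 + X 1 ^ 2 * X 3 ^ 2)

/-- `p₃ := 2(x₀²x₃²+x₁²x₂²)`. -/
noncomputable def p3 : MvPolynomial (Fin 4) ℂ := 2 * (X 0 ^ 2 * X 3 ^ 2 + X 1 ^ 2 * X 2 ^ 2)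

/-- `p₄ := 4x₀x₁x₂x₃`. -/
noncomputable def p4 : MvPolynomial (Fin 4) ℂ := 4 * (X 0 * X 1 * X 2 * X 3)

/-- The quadric `G_M := y₀² + 3(y₁² + y₂² + y₃²) + 6y₄²`. -/
noncomputable def GM : MvPolynomial (Fin 5) ℂ :=
  X 0 ^ 2 + 3 * (X 1 ^ 2 + X 2 ^ 2 + X 3 ^ 2) + 6 * X 4 ^ 2

/-- Maschke's octic polynomial `F` as an element of `ℂ[x₀,x₁,x₂,x₃]`. -/
noncomputable def F : MvPolynomial (Fin 4) ℂ :=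
  X 0 ^ 8 + X 1 ^ 8 + X 2 ^ 8 + X 3 ^ 8 +
    14 * (X 0 ^ 4 * X 1 ^ 4 + X 0 ^ 4 * X 2 ^ 4 + X 0 ^ 4 * X 3 ^ 4 +
          X 1 ^ 4 * X 2 ^ 4 + X 1 ^ 4 * X 3 ^ 4 + X 2 ^ 4 * X 3 ^ 4) +
    168 * (X 0 ^ 2 * X 1 ^ 2 * X 2 ^ 2 * X 3 ^ 2)

/-- Substituting the invariants `p₀,…,p₄` into the quadric `G_M` recovers Maschke's
octic polynomial: `G_M(p₀,p₁,p₂,p₃,p₄) = F` in `ℂ[x₀,x₁,x₂,x₃]`. -/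
theorem GM_of_invariants_eq_maschke_octic :
    aeval ![p0, p1, p2, p3, p4] GM = F := by
  simp only [GM, p0, p1, p2, p3, p4, F, map_add, map_mul, map_pow, map_ofNat, aeval_X]
  norm_num [Matrix.cons_val_zero, Matrix.cons_val_one, Matrix.head_cons, Fin.isValue, Matrix.cons_val_two, Matrix.cons_val_three, Matrix.cons_val_four, Matrix.tail_cons]
  ring
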